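/- Let u_1, ..., u_T be vectors in R^n with ||u_t||_2 \le r for all t, and let V_t = \sum_{s=1}^t u_s u_s^T + \varepsilon I for some \varepsilon > 0. Then \sum_{t=1}^T u_t^T V_t^{-1} u_t \le n ln(r^2 T / \varepsilon + 1). -/

import Mathlib

open Matrix Finset

lemma aux_psd_vecMulVec {n : ℕ} (v : Fin n → ℝ) : (vecMulVec v v).PosSemidef := by
  have h : vecMulVec v v = (replicateRow Unit v)ᴴ * replicateRow Unit v := by
    rw [conjTranspose_replicateRow]
    simp [vecMulVec_eq Unit]
  rw [h]
  exact posSemidef_conjTranspose_mul_self _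

lemma aux_step {n : ℕ} (A B : Matrix (Fin n) (Fin n) ℝ) (v : Fin n → ℝ)
    (hB : B.PosDef) (hAB : A = B + vecMulVec v v) :
    v ⬝ᵥ (A⁻¹ *ᵥ v) ≤ Real.log A.det - Real.log B.det := by
  have hA : A.PosDef := hAB ▸ hB.add_posSemidef (aux_psd_vecMulVec v)
  have hdA : 0 < A.det := hA.det_pos
  have hdB : 0 < B.det := hB.det_pos
  have hinv : A * A⁻¹ = 1 := mul_nonsing_inv A (isUnit_iff_ne_zero.mpr hdA.ne')
  set x := v ⬝ᵥ (A⁻¹ *ᵥ v) with hx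
  have key : B.det = A.det * (1 - x) := by
    have hB' : B = A * (1 - A⁻¹ * vecMulVec v v) := by
      rw [Matrix.mul_sub, Matrix.mul_one, ← Matrix.mul_assoc, hinv, Matrix.one_mul, hAB]
      abel
    rw [hB', det_mul]
    congr 1
    have h1 : A⁻¹ * vecMulVec v v = replicateCol Unit (A⁻¹ *ᵥ v) * replicateRow Unit v := by
      rw [vecMulVec_eq Unit, ← Matrix.mul_assoc, replicateCol_mulVec]
    have hcol : replicateCol Unit (-(A⁻¹ *ᵥ v)) = -(replicateCol Unit (A⁻¹ *ᵥ v)) := by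
      ext i j; simp [Matrix.replicateCol]
    have h2 := det_one_add_replicateCol_mul_replicateRow (ι := Unit) (-(A⁻¹ *ᵥ v)) v
    rw [hcol, Matrix.neg_mul, ← sub_eq_add_neg, dotProduct_neg] at h2
    rw [h1, h2, hx]
    ring
  have hpos : 0 < 1 - x := by nlinarith
  have hlog := Real.log_le_sub_one_of_pos hpos
  have hratio : Real.log (1 - x) = Real.log B.det - Real.log A.det := by
    rw [key, Real.log_mul hdA.ne' hpos.ne']
    ring
  linarith [hratio ▸ hlog]

lemma aux_psd_sum {n : ℕ} {ι : Type*} (s : Finset ι) (f : ι → Matrix (Fin n) (Fin n) ℝ)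
    (h : ∀ i ∈ s, (f i).PosSemidef) : (∑ i ∈ s, f i).PosSemidef := by
  classical
  induction s using Finset.induction with
  | empty => simpa using Matrix.PosSemidef.zero
  | @insert a s ha ih =>
    rw [Finset.sum_insert ha]
    exact (h a (Finset.mem_insert_self _ _)).add
      (ih fun i hi => h i (Finset.mem_insert_of_mem hi))

lemma aux_vecMulVec_mulVec {n : ℕ} (v x : Fin n → ℝ) :
    vecMulVec v v *ᵥ x = (v ⬝ᵥ x) • v := by
  ext i
  simp [vecMulVec, mulVec, dotProduct, Finset.sum_mul, Finset.mul_sum, mul_comm, mul_assoc,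
    mul_left_comm]

lemma aux_psd_sub {n : ℕ} (v : Fin n → ℝ) (c : ℝ) (hv : ∑ i, v i ^ 2 ≤ c) :
    (c • (1 : Matrix (Fin n) (Fin n) ℝ) - vecMulVec v v).PosSemidef := by
  refine posSemidef_iff_dotProduct_mulVec.mpr ⟨?_, ?_⟩
  · have h1 : (vecMulVec v v).IsHermitian := (aux_psd_vecMulVec v).1
    have h2 : (c • (1 : Matrix (Fin n) (Fin n) ℝ)).IsHermitian := by
      simp [Matrix.IsHermitian, conjTranspose_smul]
    exact h2.sub h1
  · intro y
    have hstar : star y = y := by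
      funext i; simp
    rw [hstar, sub_mulVec, smul_mulVec, one_mulVec, aux_vecMulVec_mulVec,
      dotProduct_sub, dotProduct_smul, dotProduct_smul]
    have hcs := Finset.sum_mul_sq_le_sq_mul_sq Finset.univ v y
    have hyy : (0:ℝ) ≤ ∑ i, y i ^ 2 := Finset.sum_nonneg fun i _ => sq_nonneg _
    have hdy : y ⬝ᵥ y = ∑ i, y i ^ 2 := by simp [dotProduct, sq]
    have hdv : y ⬝ᵥ v = ∑ i, v i * y i := by simp [dotProduct, mul_comm]
    have hdv' : v ⬝ᵥ y = ∑ i, v i * y i := by simp [dotProduct]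
    simp only [smul_eq_mul, hdy, hdv, hdv']
    nlinarith [sq_nonneg (∑ i, v i * y i)]

lemma aux_det_le {n : ℕ} (A : Matrix (Fin n) (Fin n) ℝ) (hA : A.PosDef) (c : ℝ)
    (hc : (c • (1 : Matrix (Fin n) (Fin n) ℝ) - A).PosSemidef) : A.det ≤ c ^ n := by
  have hH := hA.isHermitian
  have hev : ∀ i, hH.eigenvalues i ≤ c := by
    intro i
    set v : Fin n → ℝ := ⇑(hH.eigenvectorBasis i) with hv
    have hmv : A *ᵥ v = hH.eigenvalues i • v := hH.mulVec_eigenvectorBasis i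
    have hnorm : v ⬝ᵥ v = 1 := by
      have h1 : ‖hH.eigenvectorBasis i‖ = 1 := hH.eigenvectorBasis.orthonormal.1 i
      have h2 : (inner ℝ (hH.eigenvectorBasis i) (hH.eigenvectorBasis i) : ℝ) = 1 := by
        rw [real_inner_self_eq_norm_sq, h1]; norm_num
      simp only [PiLp.inner_apply, RCLike.inner_apply, conj_trivial] at h2
      simpa [dotProduct, hv, mul_comm] using h2
    have h0 := hc.dotProduct_mulVec_nonneg v
    have hstar : star v = v := by funext j; simp
    rw [hstar, sub_mulVec, smul_mulVec, one_mulVec, hmv, dotProduct_sub,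
      dotProduct_smul, dotProduct_smul, hnorm] at h0
    simp only [smul_eq_mul, mul_one] at h0
    linarith
  have hnn : ∀ i, (0:ℝ) ≤ hH.eigenvalues i := fun i => (hA.eigenvalues_pos i).le
  calc A.det = ∏ i, hH.eigenvalues i := by
        rw [hH.det_eq_prod_eigenvalues]; norm_num
    _ ≤ ∏ _i : Fin n, c := Finset.prod_le_prod (fun i _ => hnn i) (fun i _ => hev i)
    _ = c ^ n := by simp

/-- Elliptical potential / log-determinant lemma used in the analysis of Online Newton
Step: for vectors `u_1, ..., u_T` with `‖u_t‖₂ ≤ r` and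
`V_t = ∑_{s ≤ t} u_s u_sᵀ + ε I`, one has `∑_t u_tᵀ V_t⁻¹ u_t ≤ n ln(r² T / ε + 1)`. -/
theorem stmt_12 (n T : ℕ) (r ε : ℝ) (hr : 0 < r) (hε : 0 < ε)
    (u : Fin T → Fin n → ℝ)
    (hu : ∀ t, Real.sqrt (∑ i, u t i ^ 2) ≤ r)
    (V : Fin T → Matrix (Fin n) (Fin n) ℝ)
    (hV : ∀ t, V t = (∑ s ∈ univ.filter (fun s => s ≤ t), vecMulVec (u s) (u s)) + ε • 1) :
    ∑ t, u t ⬝ᵥ ((V t)⁻¹ *ᵥ u t) ≤ (n : ℝ) * Real.log (r ^ 2 * T / ε + 1) := by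
  classical
  have hu2 : ∀ t, ∑ i, u t i ^ 2 ≤ r ^ 2 := by
    intro t
    have h0 : (0:ℝ) ≤ ∑ i, u t i ^ 2 := Finset.sum_nonneg fun i _ => sq_nonneg _
    have := hu t
    nlinarith [Real.sq_sqrt h0, Real.sqrt_nonneg (∑ i, u t i ^ 2)]
  set W : ℕ → Matrix (Fin n) (Fin n) ℝ := fun k =>
    (∑ s ∈ univ.filter (fun s : Fin T => (s : ℕ) < k), vecMulVec (u s) (u s)) + ε • 1 with hW
  have hone : (ε • (1 : Matrix (Fin n) (Fin n) ℝ)).PosDef := by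
    rw [smul_one_eq_diagonal]
    exact Matrix.PosDef.diagonal fun _ => hε
  have hWpos : ∀ k, (W k).PosDef :=
    fun k => Matrix.PosDef.posSemidef_add
      (aux_psd_sum _ _ fun s _ => aux_psd_vecMulVec (u s)) hone
  have hWV : ∀ t : Fin T, V t = W ((t : ℕ) + 1) := by
    intro t
    rw [hV t, hW]
    congr 2
    apply Finset.filter_congr
    intro s _
    simp only [Fin.le_def, Nat.lt_succ_iff]
  have hWstep : ∀ t : Fin T, W ((t : ℕ) + 1) = W (t : ℕ) + vecMulVec (u t) (u t) := by
    intro t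
    have hins : (univ.filter fun s : Fin T => (s : ℕ) < (t : ℕ) + 1)
        = insert t (univ.filter fun s : Fin T => (s : ℕ) < (t : ℕ)) := by
      ext s
      simp only [Finset.mem_insert, Finset.mem_filter, Finset.mem_univ, true_and,
        Nat.lt_succ_iff]
      constructor
      · intro h
        rcases lt_or_eq_of_le h with h | h
        · exact Or.inr h
        · exact Or.inl (Fin.ext h)
      · rintro (rfl | h)
        · exact le_refl _
        · exact h.le
    rw [hW]
    simp only
    rw [hins, Finset.sum_insert (by simp)]
    abel
  calc ∑ t, u t ⬝ᵥ ((V t)⁻¹ *ᵥ u t)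
      ≤ ∑ t : Fin T, (Real.log (W ((t : ℕ) + 1)).det - Real.log (W (t : ℕ)).det) := by
        apply Finset.sum_le_sum
        intro t _
        rw [hWV t]
        exact aux_step _ _ _ (hWpos _) (hWstep t)
    _ = Real.log (W T).det - Real.log (W 0).det := by
        rw [Fin.sum_univ_eq_sum_range
          (fun k => Real.log (W (k + 1)).det - Real.log (W k).det) T,
          Finset.sum_range_sub (fun k => Real.log (W k).det)]
    _ ≤ (n : ℝ) * Real.log (r ^ 2 * T / ε + 1) := by
        have hW0 : (W 0).det = ε ^ n := by
          rw [hW]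
          simp [Matrix.det_smul]
        have hc : (0:ℝ) < ε + r ^ 2 * T := by positivity
        have hpsd : (((ε + r ^ 2 * T) • (1 : Matrix (Fin n) (Fin n) ℝ)) - W T).PosSemidef := by
          have hfull : (univ.filter fun s : Fin T => (s : ℕ) < T) = univ := by
            ext s; simp [s.isLt]
          have heq : ((ε + r ^ 2 * T) • (1 : Matrix (Fin n) (Fin n) ℝ)) - W T
              = ∑ s : Fin T, (r ^ 2 • (1 : Matrix (Fin n) (Fin n) ℝ) - vecMulVec (u s) (u s)) := by
            rw [hW]
            simp only [hfull]
            rw [Finset.sum_sub_distrib, Finset.sum_const, Finset.card_univ, Fintype.card_fin]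
            have : (T : ℕ) • (r ^ 2 • (1 : Matrix (Fin n) (Fin n) ℝ))
                = (r ^ 2 * T) • (1 : Matrix (Fin n) (Fin n) ℝ) := by
              rw [← Nat.cast_smul_eq_nsmul ℝ, smul_smul, mul_comm]
            rw [this, add_smul]
            abel
          rw [heq]
          exact aux_psd_sum _ _ fun s _ => aux_psd_sub (u s) _ (hu2 s)
        have hdet : (W T).det ≤ (ε + r ^ 2 * T) ^ n :=
          aux_det_le _ (hWpos T) _ hpsd
        have hlog1 : Real.log (W T).det ≤ (n : ℝ) * Real.log (ε + r ^ 2 * T) := by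
          rw [← Real.log_pow]
          exact Real.log_le_log (hWpos T).det_pos hdet
        have hlog0 : Real.log (W 0).det = (n : ℝ) * Real.log ε := by
          rw [hW0, Real.log_pow]
        have hfin : (n : ℝ) * Real.log (r ^ 2 * T / ε + 1)
            = (n : ℝ) * Real.log (ε + r ^ 2 * T) - (n : ℝ) * Real.log ε := by
          rw [show r ^ 2 * T / ε + 1 = (ε + r ^ 2 * T) / ε by field_simp; ring,
            Real.log_div hc.ne' hε.ne']
          ring
        rw [hfin, hlog0]
        linarith
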